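/- Let P, Q be nonempty subsets of Y with Q − K closed. Then the following are equivalent: (i) P ⊆ Q − K; (ii) there exists e ∈ K \ {0} such that sup_{p∈P} inf_{q∈Q} z^{e,K}(p − q) ≤ 0; (iii) for all e ∈ K \ {0}, sup_{p∈P} inf_{q∈Q} z^{e,K}(p − q) ≤ 0. -/

import Mathlib

open Set Pointwise

/-- Gerstewitz scalarization function. -/
noncomputable def zG {Y : Type*} [AddCommGroup Y] [Module ℝ Y] (e : Y) (K : Set Y) (y : Y) :
    EReal :=
  sInf ((fun t : ℝ => (t : EReal)) '' {t : ℝ | t • e - y ∈ K})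

/-- ℤ₂^{e,K}(P,Q) = sup_{p∈P} inf_{q∈Q} z^{e,K}(p − q). -/
noncomputable def Ztwo {Y : Type*} [AddCommGroup Y] [Module ℝ Y] (e : Y) (K : Set Y)
    (P Q : Set Y) : EReal :=
  ⨆ p ∈ P, ⨅ q ∈ Q, zG e K (p - q)

lemma addK {Y : Type*} [AddCommGroup Y] [Module ℝ Y] {K : Set Y} (hKconv : Convex ℝ K)
    (hKcone : ∀ (c : ℝ), 0 ≤ c → ∀ x ∈ K, c • x ∈ K) {a b : Y} (ha : a ∈ K) (hb : b ∈ K) :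
    a + b ∈ K := by
  have hm : (1/2 : ℝ) • a + (1/2 : ℝ) • b ∈ K :=
    hKconv ha hb (by norm_num) (by norm_num) (by norm_num)
  have h := hKcone 2 (by norm_num) _ hm
  have h2 : (2:ℝ) • ((1/2 : ℝ) • a + (1/2 : ℝ) • b) = a + b := by
    rw [smul_add, smul_smul, smul_smul]; norm_num
  rwa [h2] at h

/-- characterization of the u-type set order relation via ℤ₂, without
    any attainment assumption, assuming Q − K closed. -/
theorem stmt_9 {Y : Type*} [AddCommGroup Y] [Module ℝ Y] [TopologicalSpace Y]
    [IsTopologicalAddGroup Y] [ContinuousSMul ℝ Y]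
    (K : Set Y) (hKne : K.Nonempty) (hKcl : IsClosed K) (hKconv : Convex ℝ K)
    (hKcone : ∀ (c : ℝ), 0 ≤ c → ∀ x ∈ K, c • x ∈ K) (hKproper : K ≠ univ)
    (hKnontriv : ∃ e, e ∈ K \ {0})
    (P Q : Set Y) (hPne : P.Nonempty) (hQne : Q.Nonempty) (hQKcl : IsClosed (Q - K)) :
    (P ⊆ Q - K ↔ ∃ e ∈ K \ {0}, Ztwo e K P Q ≤ 0) ∧
    (P ⊆ Q - K ↔ ∀ e ∈ K \ {0}, Ztwo e K P Q ≤ 0) := by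
  -- forward: P ⊆ Q - K → ∀ e, Ztwo ≤ 0
  have fwd : P ⊆ Q - K → ∀ e ∈ K \ {0}, Ztwo e K P Q ≤ 0 := by
    intro hsub e _he
    refine iSup₂_le fun p hp => ?_
    obtain ⟨q, hq, k, hk, hqk⟩ := hsub hp
    refine le_trans (iInf₂_le q hq) ?_
    have h0 : ((0:ℝ) : EReal) ∈ (fun t : ℝ => (t : EReal)) '' {t : ℝ | t • e - (p - q) ∈ K} := by
      refine ⟨0, ?_, rfl⟩
      have hqk' : q - k = p := hqk
      have h0' : (0:ℝ) • e - (p - q) = k := by rw [zero_smul, zero_sub, neg_sub, ← hqk']; abel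
      show (0:ℝ) • e - (p - q) ∈ K
      rw [h0']; exact hk
    have := sInf_le h0
    simpa [zG] using this
  -- backward: (∃ e, Ztwo ≤ 0) → P ⊆ Q - K
  have bwd : ∀ e ∈ K \ {0}, Ztwo e K P Q ≤ 0 → P ⊆ Q - K := by
    rintro e ⟨heK, -⟩ hZ p hp
    have hinf : (⨅ q ∈ Q, zG e K (p - q)) ≤ 0 :=
      le_trans (le_iSup₂ (f := fun p _ => ⨅ q ∈ Q, zG e K (p - q)) p hp) hZ
    -- extract approximating sequence
    have key : ∀ n : ℕ, ∃ q ∈ Q, ∃ t : ℝ, t < 1/(n+1) ∧ t • e - (p - q) ∈ K := by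
      intro n
      have hpos : (0 : EReal) < ((1/(n+1) : ℝ) : EReal) := by
        rw [show (0 : EReal) = ((0:ℝ) : EReal) by simp, EReal.coe_lt_coe_iff]
        positivity
      have hlt : (⨅ q ∈ Q, zG e K (p - q)) < ((1/(n+1) : ℝ) : EReal) :=
        lt_of_le_of_lt hinf hpos
      rw [iInf_lt_iff] at hlt
      obtain ⟨q, hq⟩ := hlt
      rw [iInf_lt_iff] at hq
      obtain ⟨hqQ, hq⟩ := hq
      rw [zG, sInf_lt_iff] at hq
      obtain ⟨x, ⟨t, ht, rfl⟩, hxlt⟩ := hq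
      exact ⟨q, hqQ, t, by simpa using hxlt, ht⟩
    choose q hqQ t ht hk using key
    -- s n = max (t n) 0
    set s : ℕ → ℝ := fun n => max (t n) 0 with hs
    have hmem : ∀ n, p - s n • e ∈ Q - K := by
      intro n
      have hbase : p - t n • e ∈ Q - K :=
        ⟨q n, hqQ n, t n • e - (p - q n), hk n, by abel⟩
      rcases le_or_gt 0 (t n) with h | h
      · have : s n = t n := max_eq_left h
        rwa [this]
      · have hs0 : s n = 0 := max_eq_right h.le
        rw [hs0, zero_smul, sub_zero]
        obtain ⟨q', hq', k', hk', hqk'⟩ := hbase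
        refine ⟨q', hq', k' + (-(t n)) • e, addK hKconv hKcone hk'
          (hKcone (-(t n)) (by linarith) e heK), ?_⟩
        have hthis : q' - k' = p - t n • e := hqk'
        show q' - (k' + -t n • e) = p
        rw [sub_add_eq_sub_sub, hthis, neg_smul, sub_neg_eq_add]; abel
    -- s n → 0
    have hslim : Filter.Tendsto s Filter.atTop (nhds 0) := by
      have hupper : Filter.Tendsto (fun n : ℕ => 1/((n:ℝ)+1)) Filter.atTop (nhds 0) :=
        tendsto_one_div_add_atTop_nhds_zero_nat
      refine tendsto_of_tendsto_of_tendsto_of_le_of_le tendsto_const_nhds hupper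
        (fun n => le_max_right _ _) (fun n => ?_)
      exact max_le (ht n).le (by positivity)
    have hlim : Filter.Tendsto (fun n => p - s n • e) Filter.atTop (nhds p) := by
      have h1 : Filter.Tendsto (fun n => s n • e) Filter.atTop (nhds ((0:ℝ) • e)) :=
        hslim.smul_const e
      rw [zero_smul] at h1
      have := Filter.Tendsto.const_sub p h1
      simpa using this
    exact hQKcl.mem_of_tendsto hlim (Filter.Eventually.of_forall hmem)
  obtain ⟨e₀, he₀⟩ := hKnontriv
  constructor
  · exact ⟨fun h => ⟨e₀, he₀, fwd h e₀ he₀⟩, fun ⟨e, he, hZ⟩ => bwd e he hZ⟩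
  · exact ⟨fwd, fun h => bwd e₀ he₀ (h e₀ he₀)⟩
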